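/- Let γ ∈ (0,1), φ(s) := ⌊s⌋ + {s}^γ, and H₀(s) := Σ_{n=0}^∞ φ(2ⁿ s)/3ⁿ. Then for all j, m ∈ ℕ, setting s = j·2^{−m}, one has for every h ∈ (0, 2^{−m}): H₀(s + h) − H₀(s) ≥ 3^{−m}(2^m h)^γ. Consequently, for every γ' ∈ (γ, 1] and every nondegenerate interval I ⊂ [0, ∞), H₀ is not Hölder continuous with exponent γ' on I (the dyadic rationals being dense, the difference quotient (H₀(s+h) − H₀(s))/h^{γ'} is unbounded as h → 0⁺ at every dyadic point s). -/

import Mathlib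

/-- The Hölder staircase building block `φ(s) = ⌊s⌋ + {s}^γ`. -/
noncomputable def phiStair (γ s : ℝ) : ℝ := (⌊s⌋ : ℝ) + Int.fract s ^ γ

/-- The Schwarz-type function `H₀(s) = Σ_{n≥0} φ(2ⁿ s)/3ⁿ`. -/
noncomputable def schwarzH (γ s : ℝ) : ℝ := ∑' n : ℕ, phiStair γ (2 ^ n * s) / 3 ^ n

lemma phiStair_mono {γ : ℝ} (hγ : 0 < γ) : Monotone (phiStair γ) := by
  intro s t hst
  unfold phiStair
  rcases eq_or_lt_of_le (Int.floor_mono hst) with hf | hf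
  · have hc : ((⌊s⌋:ℤ):ℝ) = ((⌊t⌋:ℤ):ℝ) := by exact_mod_cast hf
    have hfr : Int.fract s ≤ Int.fract t := by
      simp only [Int.fract]; linarith
    exact add_le_add (le_of_eq hc) (Real.rpow_le_rpow (Int.fract_nonneg s) hfr hγ.le)
  · have h1 : Int.fract s ^ γ ≤ 1 :=
      Real.rpow_le_one (Int.fract_nonneg s) (Int.fract_lt_one s).le hγ.le
    have h2 : (0:ℝ) ≤ Int.fract t ^ γ :=
      Real.rpow_nonneg (Int.fract_nonneg t) γ
    have : (⌊s⌋ : ℝ) + 1 ≤ (⌊t⌋ : ℝ) := by exact_mod_cast hf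
    linarith

lemma summable_schwarz {γ : ℝ} (hγ : 0 < γ) {s : ℝ} (hs : 0 ≤ s) :
    Summable (fun n : ℕ => phiStair γ (2 ^ n * s) / 3 ^ n) := by
  have hb : Summable (fun n : ℕ => (s * (2/3 : ℝ) ^ n + (1/3 : ℝ) ^ n)) := by
    apply Summable.add
    · exact (summable_geometric_of_lt_one (by norm_num) (by norm_num)).mul_left s
    · exact summable_geometric_of_lt_one (by norm_num) (by norm_num)
  apply Summable.of_nonneg_of_le _ _ hb
  · intro n
    have h0 : (0:ℝ) ≤ 2 ^ n * s := by positivity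
    have : (0:ℝ) ≤ phiStair γ (2 ^ n * s) := by
      unfold phiStair
      have := Int.floor_nonneg.mpr h0
      have h2 : (0:ℝ) ≤ Int.fract (2 ^ n * s) ^ γ :=
        Real.rpow_nonneg (Int.fract_nonneg _) γ
      have h3 : (0:ℝ) ≤ (⌊2 ^ n * s⌋ : ℝ) := by exact_mod_cast this
      linarith
    positivity
  · intro n
    have h0 : (0:ℝ) ≤ 2 ^ n * s := by positivity
    have hle : phiStair γ (2 ^ n * s) ≤ 2 ^ n * s + 1 := by
      unfold phiStair
      have h1 : (⌊2 ^ n * s⌋ : ℝ) ≤ 2 ^ n * s := Int.floor_le _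
      have h2 : Int.fract (2 ^ n * s) ^ γ ≤ 1 :=
        Real.rpow_le_one (Int.fract_nonneg _) (Int.fract_lt_one _).le hγ.le
      linarith
    calc phiStair γ (2 ^ n * s) / 3 ^ n ≤ (2 ^ n * s + 1) / 3 ^ n := by
          apply div_le_div_of_nonneg_right hle
          positivity
      _ = s * (2/3 : ℝ) ^ n + (1/3 : ℝ) ^ n := by
          rw [div_pow, div_pow, one_pow, add_div, mul_comm ((2:ℝ)^n) s, mul_div_assoc]

set_option maxHeartbeats 1000000
theorem stmt_17 (γ : ℝ) (hγ : γ ∈ Set.Ioo (0:ℝ) 1) :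
    (∀ j m : ℕ, ∀ h : ℝ, 0 < h → h < 2 ^ (-(m : ℝ)) →
      schwarzH γ ((j : ℝ) * 2 ^ (-(m : ℝ)) + h) - schwarzH γ ((j : ℝ) * 2 ^ (-(m : ℝ))) ≥
        3 ^ (-(m : ℝ)) * (2 ^ (m : ℝ) * h) ^ γ) ∧
    (∀ γ' : ℝ, γ < γ' → γ' ≤ 1 → ∀ a b : ℝ, 0 ≤ a → a < b →
      ¬ ∃ C : ℝ, ∀ s₁ ∈ Set.Icc a b, ∀ s₂ ∈ Set.Icc a b,
        |schwarzH γ s₁ - schwarzH γ s₂| ≤ C * |s₁ - s₂| ^ γ') := by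
  obtain ⟨hγ0, hγ1⟩ := hγ
  have key : ∀ j m : ℕ, ∀ h : ℝ, 0 < h → h < 2 ^ (-(m : ℝ)) →
      schwarzH γ ((j : ℝ) * 2 ^ (-(m : ℝ)) + h) - schwarzH γ ((j : ℝ) * 2 ^ (-(m : ℝ))) ≥
        3 ^ (-(m : ℝ)) * (2 ^ (m : ℝ) * h) ^ γ := by
    intro j m h hh0 hh1
    have h2m : (2:ℝ) ^ (-(m : ℝ)) = ((2:ℝ) ^ m)⁻¹ := by
      rw [Real.rpow_neg (by norm_num), Real.rpow_natCast]
    have h3m : (3:ℝ) ^ (-(m : ℝ)) = ((3:ℝ) ^ m)⁻¹ := by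
      rw [Real.rpow_neg (by norm_num), Real.rpow_natCast]
    have h2mr : (2:ℝ) ^ ((m:ℝ)) = (2:ℝ) ^ m := Real.rpow_natCast 2 m
    set s : ℝ := (j : ℝ) * 2 ^ (-(m : ℝ)) with hs_def
    have hs0 : 0 ≤ s := by
      rw [hs_def]; positivity
    have hsh0 : 0 ≤ s + h := by linarith
    set f : ℕ → ℝ := fun n => phiStair γ (2 ^ n * (s + h)) / 3 ^ n with hf
    set g : ℕ → ℝ := fun n => phiStair γ (2 ^ n * s) / 3 ^ n with hg
    have hfs : Summable f := summable_schwarz hγ0 hsh0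
    have hgs : Summable g := summable_schwarz hγ0 hs0
    have hsub : Summable (fun n => f n - g n) := hfs.sub hgs
    have hnn : ∀ n, 0 ≤ f n - g n := by
      intro n
      have : phiStair γ (2 ^ n * s) ≤ phiStair γ (2 ^ n * (s + h)) := by
        apply phiStair_mono hγ0
        nlinarith [pow_pos (by norm_num : (0:ℝ) < 2) n]
      have h3 : (0:ℝ) < 3 ^ n := by positivity
      simp only [hf, hg]
      apply sub_nonneg.mpr
      exact div_le_div_of_nonneg_right this h3.le
    have hterm : f m - g m = 3 ^ (-(m : ℝ)) * (2 ^ (m : ℝ) * h) ^ γ := by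
      have hsm : (2:ℝ) ^ m * s = (j : ℝ) := by
        rw [hs_def, h2m]
        field_simp
      have hhm0 : 0 < (2:ℝ) ^ m * h := by positivity
      have hhm1 : (2:ℝ) ^ m * h < 1 := by
        rw [h2m] at hh1
        have h2p : (0:ℝ) < (2:ℝ) ^ m := by positivity
        rw [← mul_lt_mul_iff_right₀ h2p] at hh1
        simpa [mul_inv_cancel₀ h2p.ne'] using hh1
      have e1 : (2:ℝ) ^ m * (s + h) = (j : ℝ) + 2 ^ m * h := by
        rw [mul_add, hsm]
      have efract : Int.fract ((j:ℝ) + 2 ^ m * h) = 2 ^ m * h := by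
        rw [add_comm, Int.fract_add_natCast]
        exact Int.fract_eq_self.mpr ⟨hhm0.le, hhm1⟩
      have efloor : ⌊(j:ℝ) + 2 ^ m * h⌋ = (j:ℤ) := by
        rw [add_comm, Int.floor_add_natCast]
        simp [Int.floor_eq_zero_iff, Set.mem_Ico, hhm0.le, hhm1]
      have ephi1 : phiStair γ (2 ^ m * (s + h)) = (j : ℝ) + (2 ^ m * h) ^ γ := by
        rw [e1]; unfold phiStair; rw [efract, efloor]; push_cast; ring
      have ephi2 : phiStair γ (2 ^ m * s) = (j : ℝ) := by
        rw [hsm]; unfold phiStair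
        simp [Real.zero_rpow hγ0.ne']
      simp only [hf, hg, ephi1, ephi2, h3m, h2mr]
      field_simp
      ring
    have := Summable.le_tsum hsub m (fun n _ => hnn n)
    rw [hterm] at this
    rw [Summable.tsum_sub hfs hgs] at this
    exact this
  refine ⟨key, ?_⟩
  intro γ' hγγ' hγ'1 a b ha hab
  rintro ⟨C, hC⟩
  -- choose m with 2^{-m} < b - a
  obtain ⟨m, hm⟩ := exists_pow_lt_of_lt_one (sub_pos.mpr hab) (by norm_num : (2⁻¹:ℝ) < 1)
  have h2m : (2:ℝ) ^ (-(m : ℝ)) = ((2:ℝ) ^ m)⁻¹ := by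
    rw [Real.rpow_neg (by norm_num), Real.rpow_natCast]
  have h2mpos : (0:ℝ) < (2:ℝ) ^ m := by positivity
  have hm' : ((2:ℝ) ^ m)⁻¹ < b - a := by
    rw [← inv_pow]; exact hm
  set j : ℕ := ⌈a * 2 ^ m⌉₊ with hj
  set s : ℝ := (j : ℝ) * 2 ^ (-(m : ℝ)) with hs_def
  have hsa : a ≤ s := by
    rw [hs_def, h2m]
    rw [le_mul_inv_iff₀ h2mpos]
    exact Nat.le_ceil _
  have hsb : s < b := by
    have : (j : ℝ) < a * 2 ^ m + 1 := Nat.ceil_lt_add_one (by positivity)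
    rw [hs_def, h2m]
    rw [mul_inv_lt_iff₀ h2mpos]
    have h1 : ((2:ℝ)^m)⁻¹ * 2^m = 1 := inv_mul_cancel₀ h2mpos.ne'
    nlinarith
  set δ : ℝ := γ' - γ with hδ
  have hδ0 : 0 < δ := sub_pos.mpr hγγ'
  set K : ℝ := 3 ^ (-(m : ℝ)) * ((2:ℝ) ^ (m:ℝ)) ^ γ with hK
  have hKpos : 0 < K := by
    rw [hK]; positivity
  set M : ℝ := max C 1 with hM
  have hMpos : 0 < M := lt_max_of_lt_right one_pos
  set h0 : ℝ := (K / M) ^ δ⁻¹ with hh0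
  have hh0pos : 0 < h0 := by
    rw [hh0]; positivity
  set h : ℝ := min (min ((2:ℝ) ^ (-(m:ℝ))) (b - s)) h0 / 2 with hh
  have h2mneg : (0:ℝ) < (2:ℝ) ^ (-(m:ℝ)) := by rw [h2m]; positivity
  have hhpos : 0 < h := by
    rw [hh]
    have := sub_pos.mpr hsb
    positivity
  have hh2m : h < 2 ^ (-(m:ℝ)) := by
    rw [hh]
    have h1 : min (min ((2:ℝ) ^ (-(m:ℝ))) (b - s)) h0 ≤ (2:ℝ) ^ (-(m:ℝ)) :=
      le_trans (min_le_left _ _) (min_le_left _ _)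
    linarith
  have hhb : s + h ≤ b := by
    rw [hh]
    have h1 : min (min ((2:ℝ) ^ (-(m:ℝ))) (b - s)) h0 ≤ b - s :=
      le_trans (min_le_left _ _) (min_le_right _ _)
    linarith
  have hhh0 : h < h0 := by
    rw [hh]
    have h1 : min (min ((2:ℝ) ^ (-(m:ℝ))) (b - s)) h0 ≤ h0 := min_le_right _ _
    linarith
  have hδsmall : h ^ δ < K / M := by
    have := Real.rpow_lt_rpow hhpos.le hhh0 hδ0
    rwa [hh0, Real.rpow_inv_rpow (by positivity) hδ0.ne'] at this
  -- apply the key estimate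
  have hkey := key j m h hhpos hh2m
  have hKh : K * h ^ γ ≤ schwarzH γ (s + h) - schwarzH γ s := by
    have : (2 ^ (m:ℝ) * h) ^ γ = ((2:ℝ) ^ (m:ℝ)) ^ γ * h ^ γ :=
      Real.mul_rpow (by positivity) hhpos.le
    rw [hs_def]
    calc K * h ^ γ = 3 ^ (-(m : ℝ)) * (2 ^ (m:ℝ) * h) ^ γ := by rw [hK, this]; ring
      _ ≤ _ := hkey
  have hmem1 : s + h ∈ Set.Icc a b := ⟨by linarith, hhb⟩
  have hmem2 : s ∈ Set.Icc a b := ⟨hsa, hsb.le⟩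
  have hCbound := hC (s + h) hmem1 s hmem2
  have habs : schwarzH γ (s + h) - schwarzH γ s ≤ |schwarzH γ (s + h) - schwarzH γ s| :=
    le_abs_self _
  have hsh : |s + h - s| = h := by
    rw [abs_of_pos (by linarith : (0:ℝ) < s + h - s)]; ring
  rw [hsh] at hCbound
  have hγ'split : h ^ γ' = h ^ γ * h ^ δ := by
    rw [← Real.rpow_add hhpos]
    congr 1
    rw [hδ]; ring
  have hfinal : K * h ^ γ ≤ C * (h ^ γ * h ^ δ) := by
    rw [← hγ'split]
    linarith
  have hCM : C ≤ M := le_max_left _ _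
  have hhγpos : 0 < h ^ γ := Real.rpow_pos_of_pos hhpos γ
  have hhδpos : 0 < h ^ δ := Real.rpow_pos_of_pos hhpos δ
  have h1 : C * (h ^ γ * h ^ δ) ≤ M * (h ^ γ * h ^ δ) :=
    mul_le_mul_of_nonneg_right hCM (mul_pos hhγpos hhδpos).le
  have h2 : K * h ^ γ ≤ M * h ^ δ * h ^ γ := by
    calc K * h ^ γ ≤ C * (h ^ γ * h ^ δ) := hfinal
      _ ≤ M * (h ^ γ * h ^ δ) := h1
      _ = M * h ^ δ * h ^ γ := by ring
  have hlt : M * h ^ δ < K := by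
    have h3 := (lt_div_iff₀ hMpos).mp hδsmall
    calc M * h ^ δ = h ^ δ * M := mul_comm _ _
      _ < K := h3
  exact absurd (h2.trans_lt (mul_lt_mul_of_pos_right hlt hhγpos)) (lt_irrefl _)
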